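/- Let f : ℝⁿ → ℝ be convex, differentiable with L_f-Lipschitz gradient, let 𝒜 : ℝᵐ → ℝⁿ be linear with λ_min(𝒜ᵀ𝒜) > 0 (full rank), and choose τ ∈ (0, 1/L_f) and σ > 0 with 0 < τσ ≤ 1/‖𝒜ᵀ𝒜‖, so that G = σ⁻¹I_m − τ𝒜ᵀ𝒜 ⪰ 0. Let (x̂, ŷ) satisfy ∇f(x̂) + 𝒜ŷ = 0 and let sequences (xᵏ) and (yᵏ) satisfy the PAPC update xᵏ = xᵏ⁻¹ − τ(∇f(xᵏ⁻¹) + 𝒜yᵏ) for all k ≥ 1. Suppose μ > 0 is such that for every k ≥ 1: (μ/2)‖xᵏ − x̂‖² ≤ (1/2)(‖yᵏ⁻¹ − ŷ‖²_G − ‖yᵏ − ŷ‖²_G − ‖yᵏ⁻¹ − yᵏ‖²_G) + (1/(2τ))(‖xᵏ⁻¹ − x̂‖² − ‖xᵏ − x̂‖²) − (1/2)(1/τ − L_f)‖xᵏ − xᵏ⁻¹‖². Then for every α > 1, setting δ = min{ (α−1)τσ(1 − τL_f)λ_min(𝒜ᵀ𝒜)/α, μτσλ_min(𝒜ᵀ𝒜)/(ατL_f²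 + σλ_min(𝒜ᵀ𝒜)) }, δ is strictly positive and for all k ≥ 1: ‖uᵏ − û‖²_H ≤ (1/(1+δ))‖uᵏ⁻¹ − û‖²_H, where uᵏ = (xᵏ, yᵏ), û = (x̂, ŷ), and ‖(x,y)‖²_H = (1/τ)‖x‖² + ‖y‖²_G. -/

import Mathlib

set_option maxHeartbeats 1000000

open scoped RealInnerProductSpace



lemma papc_scalar_core (α L t U H g0 s q lam Ag C : ℝ) (hα : 1 < α) (hL : 0 < L)
    (hU : 0 ≤ U) (hH : 0 ≤ H) (hg0 : 0 ≤ g0)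
    (hs : s ≤ g0 * U) (hq : |q| ≤ g0 * H) (hcon : g0 ^ 2 ≤ L * s + t * q)
    (hlam0 : 0 ≤ lam) (hAgdef : Ag = lam - 1 - lam ^ 2 / (4 * α)) (hCdef : C = 2 - lam * t)
    (hAgpos : 0 < Ag) (hphi' : (α - 1) * C ^ 2 ≤ 4 * Ag) :
    H ^ 2 - 2 * q + g0 ^ 2 ≤ α * L ^ 2 * U ^ 2 + α / (α - 1) * H ^ 2 := by
  have hα1 : (0:ℝ) < α - 1 := by linarith
  have hα0 : (0:ℝ) < α := by linarith
  have key2 : 0 ≤ C * q + Ag * g0 ^ 2 + H ^ 2 / (α - 1) := by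
    have hB : (α - 1) * (H ^ 2 / (α - 1)) = H ^ 2 := by field_simp
    have hBnn : 0 ≤ H ^ 2 / (α - 1) := by positivity
    rcases abs_le.mp hq with ⟨hq1, hq2⟩
    rcases le_total 0 C with hsign | hsign
    · have h1 : -(C * (g0 * H)) ≤ C * q := by nlinarith
      have h2 : C * (g0 * H) ≤ Ag * g0 ^ 2 + H ^ 2 / (α - 1) := by
        nlinarith [sq_nonneg (2 * Ag * g0 - C * H), mul_nonneg (mul_nonneg hg0 hH) hsign]
      linarith
    · have h1 : C * (g0 * H) ≤ C * q := by nlinarith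
      have h2 : -(C * (g0 * H)) ≤ Ag * g0 ^ 2 + H ^ 2 / (α - 1) := by
        nlinarith [sq_nonneg (2 * Ag * g0 + C * H),
          mul_nonneg (mul_nonneg hg0 hH) (neg_nonneg.mpr hsign)]
      linarith
  have step1 : 0 ≤ lam * L * s + lam * t * q - lam * g0 ^ 2 := by
    have h := mul_nonneg hlam0 (sub_nonneg.mpr hcon)
    nlinarith [h]
  have step2 : lam * L * s ≤ lam * L * (g0 * U) := by
    have h := mul_le_mul_of_nonneg_left hs (mul_nonneg hlam0 (le_of_lt hL))
    nlinarith [h]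
  have hsq : α * (L * U - lam * g0 / (2 * α)) ^ 2
      = α * L ^ 2 * U ^ 2 - lam * L * (g0 * U) + lam ^ 2 / (4 * α) * g0 ^ 2 := by
    field_simp
    ring
  have hAg2 : Ag * g0 ^ 2 = (lam - 1) * g0 ^ 2 - lam ^ 2 / (4 * α) * g0 ^ 2 := by
    rw [hAgdef]; ring
  have hfin : α / (α - 1) * H ^ 2 = H ^ 2 + H ^ 2 / (α - 1) := by
    field_simp; ring
  have hCq : C * q = 2 * q - lam * t * q := by rw [hCdef]; ring
  nlinarith [step1, step2, key2, hsq, sq_nonneg (L * U - lam * g0 / (2 * α)), hAg2, hfin, hCq]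

lemma papc_scalar_key (α L t U H g0 s q : ℝ) (hα : 1 < α) (hL : 0 < L)
    (ht0 : 0 < t) (ht1 : t < 1) (hU : 0 ≤ U) (hH : 0 ≤ H) (hg0 : 0 ≤ g0)
    (hs : s ≤ g0 * U) (hq : |q| ≤ g0 * H) (hcon : g0 ^ 2 ≤ L * s + t * q) :
    H ^ 2 - 2 * q + g0 ^ 2 ≤ α * L ^ 2 * U ^ 2 + α / (α - 1) * H ^ 2 := by
  have hα1 : (0:ℝ) < α - 1 := by linarith
  have hα0 : (0:ℝ) < α := by linarith
  have hc2 : (0:ℝ) < 1 + α * (α - 1) * t ^ 2 := by positivity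
  refine papc_scalar_core α L t U H g0 s q
    (2 * α * (1 + (α - 1) * t) / (1 + α * (α - 1) * t ^ 2))
    ((2 * α * (1 + (α - 1) * t) / (1 + α * (α - 1) * t ^ 2)) - 1 -
      (2 * α * (1 + (α - 1) * t) / (1 + α * (α - 1) * t ^ 2)) ^ 2 / (4 * α))
    (2 - (2 * α * (1 + (α - 1) * t) / (1 + α * (α - 1) * t ^ 2)) * t)
    hα hL hU hH hg0 hs hq hcon (by positivity) rfl rfl ?_ ?_
  · -- 0 < Ag
    have hphi : 4 * ((2 * α * (1 + (α - 1) * t) / (1 + α * (α - 1) * t ^ 2)) - 1 -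
        (2 * α * (1 + (α - 1) * t) / (1 + α * (α - 1) * t ^ 2)) ^ 2 / (4 * α))
        - (α - 1) * (2 - (2 * α * (1 + (α - 1) * t) / (1 + α * (α - 1) * t ^ 2)) * t) ^ 2
        = 4 * α * (α - 1) * t * (2 - t) / (1 + α * (α - 1) * t ^ 2) := by
      field_simp
      ring
    have hpos : (0:ℝ) < 4 * α * (α - 1) * t * (2 - t) / (1 + α * (α - 1) * t ^ 2) := by
      apply div_pos _ hc2
      have : (0:ℝ) < 2 - t := by linarith
      positivity
    nlinarith [hphi, hpos, mul_nonneg hα1.le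
      (sq_nonneg (2 - (2 * α * (1 + (α - 1) * t) / (1 + α * (α - 1) * t ^ 2)) * t))]
  · -- (α-1) C^2 ≤ 4 Ag
    have hphi : 4 * ((2 * α * (1 + (α - 1) * t) / (1 + α * (α - 1) * t ^ 2)) - 1 -
        (2 * α * (1 + (α - 1) * t) / (1 + α * (α - 1) * t ^ 2)) ^ 2 / (4 * α))
        - (α - 1) * (2 - (2 * α * (1 + (α - 1) * t) / (1 + α * (α - 1) * t ^ 2)) * t) ^ 2
        = 4 * α * (α - 1) * t * (2 - t) / (1 + α * (α - 1) * t ^ 2) := by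
      field_simp
      ring
    have hpos : (0:ℝ) < 4 * α * (α - 1) * t * (2 - t) / (1 + α * (α - 1) * t ^ 2) := by
      apply div_pos _ hc2
      have : (0:ℝ) < 2 - t := by linarith
      positivity
    linarith [hphi, hpos]


section Aux

variable {E : Type*} [NormedAddCommGroup E] [InnerProductSpace ℝ E] [CompleteSpace E]

lemma papc_line_deriv (f : E → ℝ) (f' : E → E) (hdiff : ∀ x, HasGradientAt f (f' x) x)
    (a d : E) (θ : ℝ) :
    HasDerivAt (fun θ : ℝ => f (a + θ • d)) ⟪f' (a + θ • d), d⟫ θ := by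
  have hc : HasDerivAt (fun θ : ℝ => a + θ • d) d θ := by
    simpa using ((hasDerivAt_id θ).smul_const d).const_add a
  have hf := (hasGradientAt_iff_hasFDerivAt.mp (hdiff (a + θ • d)))
  have := hf.comp_hasDerivAt θ hc
  simp [InnerProductSpace.toDual_apply_apply] at this
  exact this

lemma papc_first_order (f : E → ℝ) (f' : E → E) (hconv : ConvexOn ℝ Set.univ f)
    (hdiff : ∀ x, HasGradientAt f (f' x) x) (a b : E) :
    f a + ⟪f' a, b - a⟫ ≤ f b := by
  set d := b - a with hd
  have hφconv : ConvexOn ℝ Set.univ (fun θ : ℝ => f (a + θ • d)) := by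
    have h1 := hconv.comp_affineMap (AffineMap.lineMap a b)
    have h2 : (fun θ : ℝ => f (a + θ • d)) = f ∘ (AffineMap.lineMap a b : ℝ →ᵃ[ℝ] E) := by
      funext θ
      simp [AffineMap.lineMap_apply, hd]
      rw [add_comm]
    rw [h2]
    simpa using h1
  have h01 : (0:ℝ) < 1 := one_pos
  have hsl := hφconv.le_slope_of_hasDerivAt (Set.mem_univ 0) (Set.mem_univ 1) h01
    (papc_line_deriv f f' hdiff a d 0)
  rw [slope_def_field] at hsl
  simp at hsl
  have : a + d = b := by rw [hd]; abel
  rw [this] at hsl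
  linarith

lemma papc_descent (f : E → ℝ) (f' : E → E) (hdiff : ∀ x, HasGradientAt f (f' x) x)
    (Lf : ℝ) (hLf : 0 < Lf) (hLip : ∀ a b, ‖f' a - f' b‖ ≤ Lf * ‖a - b‖) (a b : E) :
    f b ≤ f a + ⟪f' a, b - a⟫ + Lf / 2 * ‖b - a‖ ^ 2 := by
  set d := b - a with hd
  set c : ℝ := ⟪f' a, d⟫ with hc
  set ψ : ℝ → ℝ := fun θ => f (a + θ • d) - θ * c - Lf / 2 * ‖d‖ ^ 2 * θ ^ 2 with hψ
  have hψd : ∀ θ : ℝ, HasDerivAt ψ (⟪f' (a + θ • d), d⟫ - c - Lf / 2 * ‖d‖ ^ 2 * (2 * θ)) θ := by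
    intro θ
    have hp : HasDerivAt (fun θ : ℝ => Lf / 2 * ‖d‖ ^ 2 * θ ^ 2) (Lf / 2 * ‖d‖ ^ 2 * (2 * θ)) θ := by
      simpa [pow_one] using (hasDerivAt_pow 2 θ).const_mul (Lf / 2 * ‖d‖ ^ 2)
    have := ((papc_line_deriv f f' hdiff a d θ).sub ((hasDerivAt_id θ).mul_const c)).sub hp
    rw [one_mul] at this
    exact this
  have hmono : AntitoneOn ψ (Set.Icc (0:ℝ) 1) := by
    apply antitoneOn_of_deriv_nonpos (convex_Icc 0 1)
    · exact fun θ _ => ((hψd θ).continuousAt).continuousWithinAt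
    · exact fun θ _ => ((hψd θ).differentiableAt).differentiableWithinAt
    · intro θ hθ
      rw [interior_Icc, Set.mem_Ioo] at hθ
      rw [(hψd θ).deriv]
      have h1 : ⟪f' (a + θ • d) - f' a, d⟫ ≤ Lf * θ * ‖d‖ ^ 2 := by
        calc ⟪f' (a + θ • d) - f' a, d⟫ ≤ ‖f' (a + θ • d) - f' a‖ * ‖d‖ :=
              real_inner_le_norm _ _
          _ ≤ (Lf * ‖a + θ • d - a‖) * ‖d‖ := by
              apply mul_le_mul_of_nonneg_right (hLip _ _) (norm_nonneg _)
          _ = Lf * θ * ‖d‖ ^ 2 := by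
              rw [add_sub_cancel_left, norm_smul, Real.norm_eq_abs, abs_of_pos hθ.1]; ring
      rw [inner_sub_left] at h1
      have : (⟪f' (a + θ • d), d⟫:ℝ) - c ≤ Lf * θ * ‖d‖ ^ 2 := by rw [hc]; linarith
      nlinarith
  have h01 := hmono (Set.mem_Icc.mpr ⟨le_refl 0, zero_le_one⟩)
    (Set.mem_Icc.mpr ⟨zero_le_one, le_refl 1⟩) zero_le_one
  have hab : a + (1:ℝ) • d = b := by rw [hd]; simp
  have hab' : a + d = b := by rw [hd]; abel
  simp only [hψ, zero_smul, add_zero, one_smul, hab'] at h01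
  simp at h01
  linarith

lemma papc_lower (f : E → ℝ) (f' : E → E) (hconv : ConvexOn ℝ Set.univ f)
    (hdiff : ∀ x, HasGradientAt f (f' x) x)
    (Lf : ℝ) (hLf : 0 < Lf) (hLip : ∀ a b, ‖f' a - f' b‖ ≤ Lf * ‖a - b‖) (p q : E) :
    f q + ⟪f' q, p - q⟫ + 1 / (2 * Lf) * ‖f' p - f' q‖ ^ 2 ≤ f p := by
  set D : E := f' p - f' q with hD
  set z : E := p - Lf⁻¹ • D with hz
  have hA := papc_first_order f f' hconv hdiff q z
  have hB := papc_descent f f' hdiff Lf hLf hLip p z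
  have hzp : z - p = -(Lf⁻¹ • D) := by rw [hz]; abel
  have hzq : z - q = (p - q) - Lf⁻¹ • D := by rw [hz]; abel
  have e1 : (⟪f' p, z - p⟫:ℝ) = -(Lf⁻¹ * ⟪f' p, D⟫) := by
    rw [hzp, inner_neg_right, real_inner_smul_right]
  have e2 : ‖z - p‖ ^ 2 = Lf⁻¹ ^ 2 * ‖D‖ ^ 2 := by
    rw [hzp, norm_neg, norm_smul, mul_pow, Real.norm_eq_abs, sq_abs]
  have e3 : (⟪f' q, z - q⟫:ℝ) = ⟪f' q, p - q⟫ - Lf⁻¹ * ⟪f' q, D⟫ := by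
    rw [hzq, inner_sub_right, real_inner_smul_right]
  have e4 : (⟪f' p, D⟫:ℝ) - ⟪f' q, D⟫ = ‖D‖ ^ 2 := by
    rw [← inner_sub_left, hD, real_inner_self_eq_norm_sq]
  rw [e1, e2] at hB
  rw [e3] at hA
  have hLf' : Lf⁻¹ * Lf = 1 := inv_mul_cancel₀ (ne_of_gt hLf)
  have hexp : Lf / 2 * (Lf⁻¹ ^ 2 * ‖D‖ ^ 2) = 1 / (2 * Lf) * ‖D‖ ^ 2 := by
    field_simp
  have h5 : Lf⁻¹ * ⟪f' p, D⟫ - Lf⁻¹ * ⟪f' q, D⟫ = Lf⁻¹ * ‖D‖ ^ 2 := by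
    rw [← mul_sub, e4]
  have h6 : Lf⁻¹ * ‖D‖ ^ 2 = 2 * (1 / (2 * Lf) * ‖D‖ ^ 2) := by
    field_simp
  linarith

lemma papc_cocoercive (f : E → ℝ) (f' : E → E) (hconv : ConvexOn ℝ Set.univ f)
    (hdiff : ∀ x, HasGradientAt f (f' x) x)
    (Lf : ℝ) (hLf : 0 < Lf) (hLip : ∀ a b, ‖f' a - f' b‖ ≤ Lf * ‖a - b‖) (p q : E) :
    ‖f' p - f' q‖ ^ 2 ≤ Lf * ⟪f' p - f' q, p - q⟫ := by
  have h1 := papc_lower f f' hconv hdiff Lf hLf hLip p q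
  have h2 := papc_lower f f' hconv hdiff Lf hLf hLip q p
  have hn : ‖f' q - f' p‖ = ‖f' p - f' q‖ := norm_sub_rev _ _
  rw [hn] at h2
  have e1 : (⟪f' p, q - p⟫:ℝ) = -⟪f' p, p - q⟫ := by
    rw [show q - p = -(p - q) by abel, inner_neg_right]
  rw [e1] at h2
  have e2 : (⟪f' p - f' q, p - q⟫:ℝ) = ⟪f' p, p - q⟫ - ⟪f' q, p - q⟫ := inner_sub_left _ _ _
  have h3 : 2 * (1 / (2 * Lf)) * ‖f' p - f' q‖ ^ 2 ≤ ⟪f' p, p - q⟫ - ⟪f' q, p - q⟫ := by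
    linarith
  rw [e2]
  have : 2 * (1 / (2 * Lf)) = Lf⁻¹ := by field_simp
  rw [this] at h3
  calc ‖f' p - f' q‖ ^ 2 = Lf * (Lf⁻¹ * ‖f' p - f' q‖ ^ 2) := by
        field_simp
    _ ≤ Lf * (⟪f' p, p - q⟫ - ⟪f' q, p - q⟫) := by
        apply mul_le_mul_of_nonneg_left h3 (le_of_lt hLf)

lemma papc_key_ineq (α L τ : ℝ) (hα : 1 < α) (hL : 0 < L) (hτ : 0 < τ) (hτL : τ * L < 1)
    (g w h : E) (hco : ‖g‖ ^ 2 ≤ L * ⟪g, w⟫) :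
    ‖h - g‖ ^ 2 ≤ α * L ^ 2 * ‖w - τ • h‖ ^ 2 + α / (α - 1) * ‖h‖ ^ 2 := by
  set u : E := w - τ • h with hu
  have hw : w = u + τ • h := by rw [hu]; abel
  have hcon : ‖g‖ ^ 2 ≤ L * ⟪g, u⟫ + (τ * L) * ⟪g, h⟫ := by
    have : (⟪g, w⟫:ℝ) = ⟪g, u⟫ + τ * ⟪g, h⟫ := by
      rw [hw, inner_add_right, real_inner_smul_right]
    rw [this] at hco
    linarith [hco]
  have hexp : ‖h - g‖ ^ 2 = ‖h‖ ^ 2 - 2 * ⟪g, h⟫ + ‖g‖ ^ 2 := by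
    rw [norm_sub_sq_real, real_inner_comm h g]
  rw [hexp]
  exact papc_scalar_key α L (τ * L) ‖u‖ ‖h‖ ‖g‖ ⟪g, u⟫ ⟪g, h⟫ hα hL
    (mul_pos hτ hL) hτL (norm_nonneg _) (norm_nonneg _) (norm_nonneg _)
    (real_inner_le_norm _ _) (abs_real_inner_le_norm _ _) hcon

end Aux


/-- Theorem 3.1 (Q-linear rate) of the paper. Under Lipschitz smoothness of `f`, full rank of
`𝒜` (smallest eigenvalue `λmin` of `𝒜ᵀ𝒜` positive), step sizes `τ ∈ (0, 1/L_f)`, `σ > 0`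
with `τσ ≤ 1/‖𝒜ᵀ𝒜‖`, the PAPC primal update, the optimality condition `∇f(x̂) + 𝒜ŷ = 0`,
and the key estimate with constant `μ > 0`, for every `α > 1` the quantity
`δ = min{(α-1)τσ(1-τL_f)λmin/α, μτσλmin/(ατL_f² + σλmin)}` is positive and
`‖uᵏ - û‖²_H ≤ (1/(1+δ))‖uᵏ⁻¹ - û‖²_H` for all `k ≥ 1`, where
`‖(x,y)‖²_H = (1/τ)‖x‖² + ‖y‖²_G` and `G = σ⁻¹ I - τ 𝒜ᵀ𝒜`. -/
theorem papc_q_linear_rate {n m : ℕ}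
    (f : EuclideanSpace ℝ (Fin n) → ℝ)
    (hconv : ConvexOn ℝ Set.univ f)
    (f' : EuclideanSpace ℝ (Fin n) → EuclideanSpace ℝ (Fin n))
    (hdiff : ∀ x, HasGradientAt f (f' x) x)
    (Lf : ℝ) (hLf : 0 < Lf) (hLip : ∀ a b, ‖f' a - f' b‖ ≤ Lf * ‖a - b‖)
    (A : EuclideanSpace ℝ (Fin m) →L[ℝ] EuclideanSpace ℝ (Fin n))
    (lammin : ℝ) (hlammin_pos : 0 < lammin)
    (hlammin : IsGreatest {c : ℝ | ∀ z, c * ‖z‖ ^ 2 ≤ ‖A z‖ ^ 2} lammin)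
    (τ σ : ℝ) (hτ : 0 < τ) (hτLf : τ < 1 / Lf) (hσ : 0 < σ)
    (hτσ : τ * σ ≤ 1 / ‖(ContinuousLinearMap.adjoint A).comp A‖)
    (G : EuclideanSpace ℝ (Fin m) →L[ℝ] EuclideanSpace ℝ (Fin m))
    (hG : G = σ⁻¹ • ContinuousLinearMap.id ℝ (EuclideanSpace ℝ (Fin m)) -
      τ • ((ContinuousLinearMap.adjoint A).comp A))
    (xhat : EuclideanSpace ℝ (Fin n)) (yhat : EuclideanSpace ℝ (Fin m))
    (hopt : f' xhat + A yhat = 0)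
    (x : ℕ → EuclideanSpace ℝ (Fin n)) (y : ℕ → EuclideanSpace ℝ (Fin m))
    (hupdate : ∀ k : ℕ, 1 ≤ k → x k = x (k - 1) - τ • (f' (x (k - 1)) + A (y k)))
    (μ : ℝ) (hμ : 0 < μ)
    (hkey : ∀ k : ℕ, 1 ≤ k →
      μ / 2 * ‖x k - xhat‖ ^ 2 ≤
        (1 / 2) * (⟪y (k - 1) - yhat, G (y (k - 1) - yhat)⟫ - ⟪y k - yhat, G (y k - yhat)⟫ -
            ⟪y (k - 1) - y k, G (y (k - 1) - y k)⟫) +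
          (1 / (2 * τ)) * (‖x (k - 1) - xhat‖ ^ 2 - ‖x k - xhat‖ ^ 2) -
          (1 / 2) * (1 / τ - Lf) * ‖x k - x (k - 1)‖ ^ 2) :
    ∀ α : ℝ, 1 < α →
      0 < min ((α - 1) * τ * σ * (1 - τ * Lf) * lammin / α)
          (μ * τ * σ * lammin / (α * τ * Lf ^ 2 + σ * lammin)) ∧
      ∀ k : ℕ, 1 ≤ k →
        (1 / τ) * ‖x k - xhat‖ ^ 2 + ⟪y k - yhat, G (y k - yhat)⟫ ≤
          (1 / (1 + min ((α - 1) * τ * σ * (1 - τ * Lf) * lammin / α)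
            (μ * τ * σ * lammin / (α * τ * Lf ^ 2 + σ * lammin)))) *
          ((1 / τ) * ‖x (k - 1) - xhat‖ ^ 2 +
            ⟪y (k - 1) - yhat, G (y (k - 1) - yhat)⟫) := by
  intro α hα
  have hα0 : (0:ℝ) < α := by linarith
  have hα1 : (0:ℝ) < α - 1 := by linarith
  have hτLf' : τ * Lf < 1 := by
    rw [lt_div_iff₀ hLf] at hτLf; linarith
  have h1mτLf : (0:ℝ) < 1 - τ * Lf := by linarith
  have hσl : (0:ℝ) < σ * lammin := mul_pos hσ hlammin_pos
  have hden : (0:ℝ) < α * τ * Lf ^ 2 + σ * lammin :=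
    add_pos (mul_pos (mul_pos hα0 hτ) (pow_pos hLf 2)) hσl
  have hδ1pos : 0 < (α - 1) * τ * σ * (1 - τ * Lf) * lammin / α :=
    div_pos (mul_pos (mul_pos (mul_pos (mul_pos hα1 hτ) hσ) h1mτLf) hlammin_pos) hα0
  have hδ2pos : 0 < μ * τ * σ * lammin / (α * τ * Lf ^ 2 + σ * lammin) :=
    div_pos (mul_pos (mul_pos (mul_pos hμ hτ) hσ) hlammin_pos) hden
  set δ : ℝ := min ((α - 1) * τ * σ * (1 - τ * Lf) * lammin / α)
      (μ * τ * σ * lammin / (α * τ * Lf ^ 2 + σ * lammin)) with hδdef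
  have hδpos : 0 < δ := lt_min hδ1pos hδ2pos
  refine ⟨hδpos, ?_⟩
  -- facts about G
  have hGq : ∀ z, (⟪z, G z⟫ : ℝ) = σ⁻¹ * ‖z‖ ^ 2 - τ * ‖A z‖ ^ 2 := by
    intro z
    rw [hG]
    simp only [ContinuousLinearMap.sub_apply, ContinuousLinearMap.smul_apply,
      ContinuousLinearMap.coe_id', id_eq, ContinuousLinearMap.coe_comp', Function.comp_apply]
    rw [inner_sub_right, real_inner_smul_right, real_inner_smul_right,
      ContinuousLinearMap.adjoint_inner_right, real_inner_self_eq_norm_sq,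
      real_inner_self_eq_norm_sq]
  have hAop : ∀ z : EuclideanSpace ℝ (Fin m), τ * ‖A z‖ ^ 2 ≤ σ⁻¹ * ‖z‖ ^ 2 := by
    intro z
    set B := (ContinuousLinearMap.adjoint A).comp A with hB
    have hAzB : ‖A z‖ ^ 2 = ⟪z, B z⟫ := by
      rw [hB, ContinuousLinearMap.coe_comp', Function.comp_apply,
        ContinuousLinearMap.adjoint_inner_right, real_inner_self_eq_norm_sq]
    rcases eq_or_lt_of_le (norm_nonneg B) with hB0 | hBpos
    · have hBz : ‖B z‖ = 0 := by
        have h1 := B.le_opNorm z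
        have h2 : ‖B‖ = 0 := hB0.symm
        rw [h2, zero_mul] at h1
        have := norm_nonneg (B z)
        linarith
      have hBz0 : B z = 0 := norm_eq_zero.mp hBz
      rw [hAzB, hBz0, inner_zero_right, mul_zero]
      positivity
    · have hτσB : τ * σ * ‖B‖ ≤ 1 := by
        rw [le_div_iff₀ hBpos] at hτσ; linarith
      have h1 : ⟪z, B z⟫ ≤ ‖B‖ * ‖z‖ ^ 2 := by
        calc (⟪z, B z⟫:ℝ) ≤ ‖z‖ * ‖B z‖ := real_inner_le_norm _ _
          _ ≤ ‖z‖ * (‖B‖ * ‖z‖) := by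
              apply mul_le_mul_of_nonneg_left (B.le_opNorm z) (norm_nonneg _)
          _ = ‖B‖ * ‖z‖ ^ 2 := by ring
      have h2 : τ * (‖B‖ * ‖z‖ ^ 2) ≤ σ⁻¹ * ‖z‖ ^ 2 := by
        have key : τ * ‖B‖ ≤ σ⁻¹ := by
          rw [inv_eq_one_div, le_div_iff₀ hσ]
          nlinarith [hτσB]
        nlinarith [mul_nonneg (sub_nonneg.mpr key) (sq_nonneg ‖z‖), sq_nonneg ‖z‖]
      calc τ * ‖A z‖ ^ 2 = τ * ⟪z, B z⟫ := by rw [hAzB]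
        _ ≤ τ * (‖B‖ * ‖z‖ ^ 2) := by
            apply mul_le_mul_of_nonneg_left h1 hτ.le
        _ ≤ σ⁻¹ * ‖z‖ ^ 2 := h2
  have hGpos : ∀ z, 0 ≤ (⟪z, G z⟫ : ℝ) := by
    intro z; rw [hGq z]; linarith [hAop z]
  have hGup : ∀ z, (⟪z, G z⟫ : ℝ) ≤ ‖A z‖ ^ 2 / (σ * lammin) := by
    intro z
    rw [hGq z]
    have hl := hlammin.1 z
    have h1 : σ⁻¹ * ‖z‖ ^ 2 ≤ ‖A z‖ ^ 2 / (σ * lammin) := by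
      rw [le_div_iff₀ hσl]
      have : σ⁻¹ * ‖z‖ ^ 2 * (σ * lammin) = lammin * ‖z‖ ^ 2 * (σ⁻¹ * σ) := by ring
      rw [this, inv_mul_cancel₀ (ne_of_gt hσ), mul_one]
      exact hl
    nlinarith [mul_nonneg hτ.le (sq_nonneg ‖A z‖)]
  -- delta bounds
  have d1 : δ * α ≤ (α - 1) * τ * σ * (1 - τ * Lf) * lammin := by
    have := min_le_left ((α - 1) * τ * σ * (1 - τ * Lf) * lammin / α)
      (μ * τ * σ * lammin / (α * τ * Lf ^ 2 + σ * lammin))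
    rw [← hδdef] at this
    calc δ * α ≤ ((α - 1) * τ * σ * (1 - τ * Lf) * lammin / α) * α :=
          mul_le_mul_of_nonneg_right this hα0.le
      _ = (α - 1) * τ * σ * (1 - τ * Lf) * lammin := by
          field_simp
  have d2 : δ * (α * τ * Lf ^ 2 + σ * lammin) ≤ μ * τ * σ * lammin := by
    have := min_le_right ((α - 1) * τ * σ * (1 - τ * Lf) * lammin / α)
      (μ * τ * σ * lammin / (α * τ * Lf ^ 2 + σ * lammin))
    rw [← hδdef] at this
    calc δ * (α * τ * Lf ^ 2 + σ * lammin)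
        ≤ (μ * τ * σ * lammin / (α * τ * Lf ^ 2 + σ * lammin)) * (α * τ * Lf ^ 2 + σ * lammin) :=
          mul_le_mul_of_nonneg_right this hden.le
      _ = μ * τ * σ * lammin := by field_simp
  have co1 : δ / τ + δ * α * Lf ^ 2 / (σ * lammin) ≤ μ := by
    rw [div_add_div _ _ (ne_of_gt hτ) (ne_of_gt hσl), div_le_iff₀ (mul_pos hτ hσl)]
    nlinarith [d2]
  have co2 : δ * α / ((α - 1) * (σ * lammin)) ≤ τ * (1 - τ * Lf) := by
    rw [div_le_iff₀ (mul_pos hα1 hσl)]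
    nlinarith [d1]
  -- main loop
  intro k hk
  have hup := hupdate k hk
  set h : EuclideanSpace ℝ (Fin n) := f' (x (k - 1)) + A (y k) with hh
  set w : EuclideanSpace ℝ (Fin n) := x (k - 1) - xhat with hw
  set g : EuclideanSpace ℝ (Fin n) := f' (x (k - 1)) - f' xhat with hg
  have hxk : x k - xhat = w - τ • h := by
    rw [hup, hw, hh]; abel
  have hfhat : f' xhat = -(A yhat) := by
    have := hopt; linear_combination (norm := module) this
  have hv : A (y k - yhat) = h - g := by
    rw [map_sub, hh, hg, hfhat]; abel
  have hco : ‖g‖ ^ 2 ≤ Lf * ⟪g, w⟫ :=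
    papc_cocoercive f f' hconv hdiff Lf hLf hLip (x (k - 1)) xhat
  have hkv := papc_key_ineq α Lf τ hα hLf hτ hτLf' g w h hco
  have hN : ‖A (y k - yhat)‖ ^ 2 ≤ α * Lf ^ 2 * ‖x k - xhat‖ ^ 2 + α / (α - 1) * ‖h‖ ^ 2 := by
    rw [hv, hxk]
    have : ‖h - g‖ = ‖(h - g : EuclideanSpace ℝ (Fin n))‖ := rfl
    exact hkv
  have hP : ‖x k - x (k - 1)‖ ^ 2 = τ ^ 2 * ‖h‖ ^ 2 := by
    have hxkk : x k - x (k - 1) = -(τ • h) := by rw [hup]; abel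
    rw [hxkk, norm_neg, norm_smul, Real.norm_eq_abs, abs_of_pos hτ, mul_pow]
  -- scalar assembly
  have hkeyk := hkey k hk
  have hD := hGpos (y (k - 1) - y k)
  have hYk := hGup (y k - yhat)
  have bN : ‖A (y k - yhat)‖ ^ 2 / (σ * lammin)
      ≤ (α * Lf ^ 2 * ‖x k - xhat‖ ^ 2 + α / (α - 1) * ‖h‖ ^ 2) / (σ * lammin) :=
    (div_le_div_iff_of_pos_right hσl).mpr hN
  have bY : δ * ⟪y k - yhat, G (y k - yhat)⟫
      ≤ δ * ((α * Lf ^ 2 * ‖x k - xhat‖ ^ 2 + α / (α - 1) * ‖h‖ ^ 2) / (σ * lammin)) :=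
    mul_le_mul_of_nonneg_left (le_trans hYk bN) hδpos.le
  have b3 : δ * ((α * Lf ^ 2 * ‖x k - xhat‖ ^ 2 + α / (α - 1) * ‖h‖ ^ 2) / (σ * lammin))
      = (δ * α * Lf ^ 2 / (σ * lammin)) * ‖x k - xhat‖ ^ 2
        + (δ * α / ((α - 1) * (σ * lammin))) * ‖h‖ ^ 2 := by
    field_simp
  have c1 : (δ / τ + δ * α * Lf ^ 2 / (σ * lammin)) * ‖x k - xhat‖ ^ 2
      ≤ μ * ‖x k - xhat‖ ^ 2 :=
    mul_le_mul_of_nonneg_right co1 (sq_nonneg _)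
  have c2 : (δ * α / ((α - 1) * (σ * lammin))) * ‖h‖ ^ 2 ≤ τ * (1 - τ * Lf) * ‖h‖ ^ 2 :=
    mul_le_mul_of_nonneg_right co2 (sq_nonneg _)
  have hPe : (1 / τ - Lf) * ‖x k - x (k - 1)‖ ^ 2 = τ * (1 - τ * Lf) * ‖h‖ ^ 2 := by
    rw [hP]
    field_simp
  have h2τe : 1 / (2 * τ) = 1 / 2 * (1 / τ) := by
    rw [one_div, one_div, mul_inv]; ring
  have h1δ : (0:ℝ) < 1 + δ := by linarith
  rw [h2τe] at hkeyk
  rw [← hw] at hkeyk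
  conv_rhs => rw [one_div_mul_eq_div]
  rw [le_div_iff₀ h1δ]
  ring_nf at hkeyk bY b3 c1 c2 hPe ⊢
  linarith [hkeyk, bY, b3, c1, c2, hPe, hD]
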